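/- Let (A, Con, Δ) be a normal default structure with trivial entailment. The derived skeptical nonmonotonic consequence relation |~_A satisfies cautious cut: for finite consistent sets X, T, Y, if X |~_A T and X ∪ T |~_A Y, then X |~_A Y. -/

import Mathlib

/-- A set is consistent if every finite subset of it lies in Con. -/
def IsCons {α : Type*} (Con : Set α → Prop) (S : Set α) : Prop :=
  ∀ X : Set α, X ⊆ S → X.Finite → Con X

/-- With trivial entailment: φ(x, S, 0) = x and
φ(x, S, i+1) = φ(x, S, i) ∪ {a | (X, a) ∈ Δ, X ⊆ φ(x, S, i), {a} ∪ S consistent}. -/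
def phiT {α : Type*} (Con : Set α → Prop) (Δ : Set (Set α × α)) (x S : Set α) :
    ℕ → Set α
  | 0 => x
  | i + 1 =>
      phiT Con Δ x S i ∪
        {a | ∃ X : Set α, (X, a) ∈ Δ ∧ X ⊆ phiT Con Δ x S i ∧ IsCons Con ({a} ∪ S)}

/-- Φ(x, S) = ⋃_{i≥0} φ(x, S, i). -/
def PhiT {α : Type*} (Con : Set α → Prop) (Δ : Set (Set α × α)) (x S : Set α) : Set α :=
  ⋃ i, phiT Con Δ x S i

/-- A consistent set y is an extension of x (x ε y) if Φ(x, y) = y. -/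
def ExtT {α : Type*} (Con : Set α → Prop) (Δ : Set (Set α × α)) (x y : Set α) : Prop :=
  IsCons Con y ∧ PhiT Con Δ x y = y

/-- Skeptical nonmonotonic consequence: X |~ a iff a belongs to every extension of X. -/
def Nmc {α : Type*} (Con : Set α → Prop) (Δ : Set (Set α × α)) (X : Set α) (a : α) : Prop :=
  ∀ y : Set α, ExtT Con Δ X y → a ∈ y

/-- X |~ Y iff X |~ b for every b ∈ Y. -/
def NmcS {α : Type*} (Con : Set α → Prop) (Δ : Set (Set α × α)) (X Y : Set α) : Prop :=
  ∀ b ∈ Y, Nmc Con Δ X b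


lemma phiT_mono_step {α : Type*} (Con : Set α → Prop) (Δ : Set (Set α × α)) (x S : Set α)
    (i : ℕ) : phiT Con Δ x S i ⊆ phiT Con Δ x S (i + 1) :=
  Set.subset_union_left

lemma phiT_mono_le {α : Type*} (Con : Set α → Prop) (Δ : Set (Set α × α)) (x S : Set α)
    {i j : ℕ} (h : i ≤ j) : phiT Con Δ x S i ⊆ phiT Con Δ x S j := by
  induction j with
  | zero => simpa [Nat.le_zero.mp h]
  | succ j ih =>
    rcases Nat.lt_or_ge i (j+1) with h' | h'
    · exact (ih (Nat.lt_succ_iff.mp h')).trans (phiT_mono_step Con Δ x S j)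
    · have : i = j + 1 := le_antisymm h h'
      simp [this]

lemma phiT_mono_x {α : Type*} (Con : Set α → Prop) (Δ : Set (Set α × α)) {x x' : Set α}
    (S : Set α) (h : x ⊆ x') (i : ℕ) : phiT Con Δ x S i ⊆ phiT Con Δ x' S i := by
  induction i with
  | zero => exact h
  | succ i ih =>
    intro a ha
    rcases ha with ha | ⟨X, hX, hsub, hc⟩
    · exact Or.inl (ih ha)
    · exact Or.inr ⟨X, hX, hsub.trans ih, hc⟩

lemma finite_subset_PhiT {α : Type*} (Con : Set α → Prop) (Δ : Set (Set α × α)) (x S : Set α)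
    {W : Set α} (hW : W.Finite) (h : W ⊆ PhiT Con Δ x S) :
    ∃ j, W ⊆ phiT Con Δ x S j := by
  revert h
  refine Set.Finite.induction_on (motive := fun W _ => W ⊆ PhiT Con Δ x S → ∃ j, W ⊆ phiT Con Δ x S j) W hW (fun _ => ⟨0, by simp⟩) ?_
  intro a W' _ _ ih h
  rcases ih ((Set.subset_insert a W').trans h) with ⟨j, hj⟩
  rcases Set.mem_iUnion.mp (h (Set.mem_insert a W')) with ⟨k, hk⟩
  refine ⟨max j k, ?_⟩
  intro b hb
  rcases hb with rfl | hb
  · exact phiT_mono_le Con Δ x S (le_max_right j k) hk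
  · exact phiT_mono_le Con Δ x S (le_max_left j k) (hj hb)

lemma ext_cut {α : Type*} (Con : Set α → Prop) (Δ : Set (Set α × α))
    (hCfin : ∀ X : Set α, Con X → X.Finite)
    (hDelta : ∀ p ∈ Δ, Con p.1)
    {X T y : Set α} (hT : T ⊆ y) (hy : ExtT Con Δ X y) : ExtT Con Δ (X ∪ T) y := by
  obtain ⟨hcons, hPhi⟩ := hy
  have hXy : X ⊆ y := by
    rw [← hPhi]; exact Set.subset_iUnion (phiT Con Δ X y) 0
  refine ⟨hcons, ?_⟩
  apply Set.Subset.antisymm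
  · -- PhiT (X ∪ T) y ⊆ y
    refine Set.iUnion_subset fun i => ?_
    induction i with
    | zero => exact Set.union_subset hXy hT
    | succ i ih =>
      intro a ha
      rcases ha with ha | ⟨W, hWΔ, hWsub, hc⟩
      · exact ih ha
      · have hWy : W ⊆ PhiT Con Δ X y := by rw [hPhi]; exact hWsub.trans ih
        rcases finite_subset_PhiT Con Δ X y (hCfin W (hDelta (W, a) hWΔ)) hWy with ⟨j, hj⟩
        have : a ∈ phiT Con Δ X y (j + 1) := Or.inr ⟨W, hWΔ, hj, hc⟩
        rw [← hPhi]
        exact Set.subset_iUnion (phiT Con Δ X y) (j+1) this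
  · -- y ⊆ PhiT (X ∪ T) y
    conv_lhs => rw [← hPhi]
    exact Set.iUnion_mono fun i => phiT_mono_x Con Δ y Set.subset_union_left i

/-- the skeptical nonmonotonic consequence relation satisfies cautious cut:
if X |~ T and X ∪ T |~ Y, then X |~ Y. -/
theorem skeptical_cautious_cut {α : Type*} (Con : Set α → Prop) (Δ : Set (Set α × α))
    -- Con is a collection of finite subsets of A with ∅ ∈ Con, closed under
    -- subsets, containing every singleton
    (hCfin : ∀ X : Set α, Con X → X.Finite)
    (hCempty : Con ∅)
    (hCsub : ∀ X Y : Set α, X ⊆ Y → Con Y → Con X)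
    (hCsing : ∀ a : α, Con {a})
    -- Δ is a set of normal default rules, each a pair (X, a) with X ∈ Con
    (hDelta : ∀ p ∈ Δ, Con p.1) :
    ∀ X T Y : Set α, Con X → Con T → Con Y →
      NmcS Con Δ X T → NmcS Con Δ (X ∪ T) Y → NmcS Con Δ X Y := by
  intro X T Y _ _ _ hXT hXTY b hb y hy
  have hTy : T ⊆ y := fun t ht => hXT t ht y hy
  exact hXTY b hb y (ext_cut Con Δ hCfin hDelta hTy hy)
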